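/- Let A be a symmetric positive definite real 3×3 matrix, u ∈ ℝ³ a unit vector, and Θ a nonempty finite set of reals with 0 < |θ'| ≤ π for every θ' ∈ Θ; set θ_m := min_{θ'∈Θ} |θ'|. Suppose Δ* > 0 satisfies Δ(v,u) ≥ Δ* for every unit eigenvector v of A, and let 0 < γ < 4Δ*/π² and 0 < δ < (4Δ*/π² − γ)·θ_m²/2. If (R,θ) ∈ SO(3) × ℝ satisfies ψ(A·T(R,θ)) = 0, γθ + 2uᵀψ(A·T(R,θ)) = 0, and U(R,θ) − min_{θ'∈Θ} U(R,θ') ≤ δ, then R = I₃ and θ = 0. (That is, the only critical point of U lying in the flow set is the desired equilibrium (I₃,0).) -/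

import Mathlib

open Matrix

noncomputable section

abbrev M3 : Type := Matrix (Fin 3) (Fin 3) ℝ
abbrev V3 : Type := Fin 3 → ℝ

/-- skew-symmetric matrix associated to `x`: `skew x *ᵥ y = x ×₃ y`. -/
def skew (x : V3) : M3 :=
  !![0, -x 2, x 1; x 2, 0, -x 0; -x 1, x 0, 0]

/-- the special orthogonal group SO(3) as a subset of 3×3 matrices -/
def SO3 : Set M3 := {R | Rᵀ * R = 1 ∧ R.det = 1}

/-- Rodrigues formula -/
def Ra (θ : ℝ) (u : V3) : M3 :=
  1 + Real.sin θ • skew u + (1 - Real.cos θ) • (skew u * skew u)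

/-- `psi M = vec (P_a M)`, the vector part of the antisymmetric projection -/
def psi (M : M3) : V3 :=
  ![(M 2 1 - M 1 2) / 2, (M 0 2 - M 2 0) / 2, (M 1 0 - M 0 1) / 2]

/-- the angular-warping transformation `T(R,θ) = R · Ra(θ,u)` -/
def Tmap (u : V3) (R : M3) (θ : ℝ) : M3 := R * Ra θ u

/-- the potential function `U(R,θ)` on SO(3) × ℝ -/
def Ufun (A : M3) (u : V3) (γ : ℝ) (R : M3) (θ : ℝ) : ℝ :=
  (A * (1 - Tmap u R θ)).trace + γ / 2 * θ ^ 2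

/-- Euclidean norm on ℝ³ -/
def enorm3 (x : V3) : ℝ := Real.sqrt (x ⬝ᵥ x)

/-- Frobenius norm of a 3×3 matrix -/
def fnorm (M : M3) : ℝ := Real.sqrt ((Mᵀ * M).trace)

/-- `E(M) := (tr(M) I − Mᵀ)/2` -/
def Emap (M : M3) : M3 := (2⁻¹ : ℝ) • (M.trace • (1 : M3) - Mᵀ)

/-- `D_R(R,θ)` from Lemma 2 -/
def DR (A : M3) (u : V3) (R : M3) (θ : ℝ) : M3 :=
  Ra θ u * Emap (A * Tmap u R θ) * (Ra θ u)ᵀ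

/-- `D_θ(R,θ)` from Lemma 2 -/
def Dθ (A : M3) (u : V3) (R : M3) (θ : ℝ) : V3 :=
  (Ra θ u * Emap (A * Tmap u R θ)) *ᵥ u - skew (Ra θ u *ᵥ psi (A * Tmap u R θ)) *ᵥ u

/-- Δ(v,u) from the construction of the synergistic gap -/
def Delta (A : M3) (v u : V3) : ℝ :=
  u ⬝ᵥ ((A.trace • (1 : M3) - A - (2 * (v ⬝ᵥ A *ᵥ v)) • ((1 : M3) - vecMulVec v v)) *ᵥ u)

/-- `v` is a unit eigenvector of `A` -/
def IsUnitEigen (A : M3) (v : V3) : Prop :=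
  v ⬝ᵥ v = 1 ∧ ∃ lam : ℝ, A *ᵥ v = lam • v

/-- Ā := (tr(A) I − A)/2 -/
def Abar (A : M3) : M3 := (2⁻¹ : ℝ) • (A.trace • (1 : M3) - A)

/-- `lam` is an eigenvalue of `M` -/
def IsEigen (M : M3) (lam : ℝ) : Prop := ∃ w : V3, w ≠ 0 ∧ M *ᵥ w = lam • w

/-! ### Auxiliary lemmas -/

lemma skew_transpose (x : V3) : (skew x)ᵀ = - skew x := by
  ext i j
  fin_cases i <;> fin_cases j <;> simp [skew]

lemma skew_mulVec_self (x : V3) : skew x *ᵥ x = 0 := by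
  funext i
  fin_cases i <;> (simp [skew, Matrix.mulVec, dotProduct, Fin.sum_univ_three]; ring)

lemma skew_smul_vec (a : ℝ) (x : V3) : skew (a • x) = a • skew x := by
  ext i j
  fin_cases i <;> fin_cases j <;> (simp [skew]; try ring)

lemma skew_zero : skew (0 : V3) = 0 := by
  ext i j
  fin_cases i <;> fin_cases j <;>
    simp [skew, Matrix.vecHead, Matrix.vecTail]

lemma skew_mulVec_anticomm (x y : V3) : skew x *ᵥ y = - (skew y *ᵥ x) := by
  funext i
  fin_cases i <;>
    simp [skew, Matrix.mulVec, dotProduct, Fin.sum_univ_three] <;> ring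

lemma skew_mul_skew (x y : V3) : skew x * skew y = vecMulVec y x - (x ⬝ᵥ y) • 1 := by
  ext i j
  fin_cases i <;> fin_cases j <;>
    simp [skew, Matrix.mul_apply, Fin.sum_univ_three, vecMulVec_apply, Matrix.one_apply,
      dotProduct] <;> ring

lemma trace_vecMulVec (a b : V3) : (vecMulVec a b).trace = a ⬝ᵥ b := by
  simp [Matrix.trace, Fin.sum_univ_three, vecMulVec_apply, dotProduct, Matrix.diag]

lemma mul_vecMulVec (M : M3) (a b : V3) : M * vecMulVec a b = vecMulVec (M *ᵥ a) b := by
  ext i j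
  simp [Matrix.mul_apply, Fin.sum_univ_three, vecMulVec_apply, Matrix.mulVec, dotProduct]
  ring

lemma vecMulVec_mul (M : M3) (a b : V3) : vecMulVec a b * M = vecMulVec a (Mᵀ *ᵥ b) := by
  ext i j
  simp [Matrix.mul_apply, Fin.sum_univ_three, vecMulVec_apply, Matrix.mulVec, dotProduct,
    Matrix.transpose_apply]
  ring

lemma vecMulVec_mulVec (a b x : V3) : vecMulVec a b *ᵥ x = (b ⬝ᵥ x) • a := by
  funext i
  simp [Matrix.mulVec, Fin.sum_univ_three, vecMulVec_apply, dotProduct]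
  ring

lemma vecMulVec_transpose (a b : V3) : (vecMulVec a b)ᵀ = vecMulVec b a := by
  ext i j
  simp [vecMulVec_apply, Matrix.transpose_apply]
  ring

lemma smul_vecMulVec (a : ℝ) (x y : V3) : vecMulVec (a • x) y = a • vecMulVec x y := by
  ext i j
  simp [vecMulVec_apply]
  ring

lemma vecMulVec_zero_right (a : V3) : vecMulVec a (0 : V3) = 0 := by
  ext i j; simp [vecMulVec_apply]

lemma zero_vecMulVec (a : V3) : vecMulVec (0 : V3) a = 0 := by
  ext i j; simp [vecMulVec_apply]

lemma det_vecMulVec (a b : V3) : (vecMulVec a b).det = 0 := by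
  simp [Matrix.det_fin_three, vecMulVec_apply]
  ring

lemma skew_conj_pure (M : M3) (x : V3) : Mᵀ * skew (M *ᵥ x) * M = M.det • skew x := by
  ext i j
  fin_cases i <;> fin_cases j <;>
    simp [skew, Matrix.mul_apply, Fin.sum_univ_three, Matrix.mulVec, dotProduct,
      Matrix.det_fin_three, Matrix.transpose_apply, Matrix.vecMul, Matrix.vecHead,
      Matrix.vecTail] <;> ring

lemma sym_skew_pure (M : M3) (x : V3) :
    M * skew x + skew x * Mᵀ = skew (M.trace • x - Mᵀ *ᵥ x) := by
  ext i j
  fin_cases i <;> fin_cases j <;>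
    simp [skew, Matrix.mul_apply, Fin.sum_univ_three, Matrix.mulVec, dotProduct,
      Matrix.trace, Matrix.diag, Pi.smul_apply, Pi.sub_apply, Matrix.transpose_apply,
      Matrix.vecMul, Matrix.vecHead, Matrix.vecTail] <;> ring

lemma trace_sym_mul_skew (S : M3) (x : V3) (hS : Sᵀ = S) : (S * skew x).trace = 0 := by
  have h1 : (S * skew x)ᵀ = - (skew x * S) := by
    rw [Matrix.transpose_mul, skew_transpose, hS, Matrix.neg_mul]
  have h2 := Matrix.trace_transpose (S * skew x)
  rw [h1, Matrix.trace_neg, Matrix.trace_mul_comm] at h2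
  linarith

lemma trace_skew (x : V3) : (skew x).trace = 0 := by
  simp [skew, Matrix.trace, Fin.sum_univ_three, Matrix.diag]

lemma cross_zero_unit (w y : V3) (hw : w ⬝ᵥ w = 1) (h : skew w *ᵥ y = 0) :
    y = (w ⬝ᵥ y) • w := by
  have h0 := congrFun h 0
  have h1 := congrFun h 1
  have h2 := congrFun h 2
  simp [skew, Matrix.mulVec, dotProduct, Fin.sum_univ_three] at h0 h1 h2
  simp [dotProduct, Fin.sum_univ_three] at hw
  funext i
  fin_cases i <;> simp [Pi.smul_apply, dotProduct, Fin.sum_univ_three]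
  · linear_combination (-(y 0)) * hw - w 1 * h2 + w 2 * h1
  · linear_combination (-(y 1)) * hw + w 0 * h2 - w 2 * h0
  · linear_combination (-(y 2)) * hw - w 0 * h1 + w 1 * h0

lemma dot_self_pos (v : V3) (hv : v ≠ 0) : 0 < v ⬝ᵥ v := by
  have h : ∃ i, v i ≠ 0 := by
    by_contra h
    push_neg at h
    exact hv (funext fun i => h i)
  obtain ⟨i, hi⟩ := h
  simp [dotProduct, Fin.sum_univ_three]
  fin_cases i
  · have hi' : v 0 ≠ 0 := hi
    nlinarith [mul_self_pos.mpr hi', mul_self_nonneg (v 1), mul_self_nonneg (v 2)]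
  · have hi' : v 1 ≠ 0 := hi
    nlinarith [mul_self_pos.mpr hi', mul_self_nonneg (v 0), mul_self_nonneg (v 2)]
  · have hi' : v 2 ≠ 0 := hi
    nlinarith [mul_self_pos.mpr hi', mul_self_nonneg (v 0), mul_self_nonneg (v 1)]

lemma dot_sym_swap (A : M3) (hA : Aᵀ = A) (x y : V3) :
    x ⬝ᵥ (A *ᵥ y) = y ⬝ᵥ (A *ᵥ x) := by
  have e01 := congrFun (congrFun hA 0) 1
  have e02 := congrFun (congrFun hA 0) 2
  have e12 := congrFun (congrFun hA 1) 2
  simp [Matrix.transpose_apply] at e01 e02 e12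
  simp [dotProduct, Matrix.mulVec, Fin.sum_univ_three]
  linear_combination (x 1 * y 0 - x 0 * y 1) * e01 + (x 2 * y 0 - x 0 * y 2) * e02 +
    (x 2 * y 1 - x 1 * y 2) * e12

/-- columns `w`, `y`, `skew w *ᵥ y` -/
lemma col_det (w y : V3) :
    (Matrix.of fun i j => ![w, y, skew w *ᵥ y] j i).det
      = (skew w *ᵥ y) ⬝ᵥ (skew w *ᵥ y) := by
  simp [Matrix.det_fin_three, skew, Matrix.mulVec, dotProduct, Fin.sum_univ_three]
  ring

lemma jordan_one_sub_cos (t : ℝ) (ht : |t| ≤ Real.pi) :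
    2 * t ^ 2 / Real.pi ^ 2 ≤ 1 - Real.cos t := by
  have hπ := Real.pi_pos
  set s := |t| with hs
  have hs0 : 0 ≤ s := abs_nonneg t
  have hcs : Real.cos s = Real.cos t := Real.cos_abs t
  have hsq : s ^ 2 = t ^ 2 := sq_abs t
  have hhalf : 0 ≤ s / 2 := by linarith
  have hhalf' : s / 2 ≤ Real.pi / 2 := by linarith
  have hsin := Real.mul_le_sin hhalf hhalf'
  have hsin0 : 0 ≤ 2 / Real.pi * (s / 2) := by positivity
  have hcos2 : Real.cos s = 1 - 2 * Real.sin (s / 2) ^ 2 := by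
    have h := Real.cos_sq (s / 2)
    have h2 : Real.sin (s / 2) ^ 2 = 1 - Real.cos (s / 2) ^ 2 := Real.sin_sq (s / 2)
    rw [show 2 * (s / 2) = s by ring] at h
    nlinarith [h, h2]
  have h1 : (2 / Real.pi * (s / 2)) ^ 2 ≤ Real.sin (s / 2) ^ 2 := by
    nlinarith [hsin, hsin0]
  have h2 : (2 / Real.pi * (s / 2)) ^ 2 = s ^ 2 / Real.pi ^ 2 := by
    field_simp
  have h1' : s ^ 2 / Real.pi ^ 2 ≤ Real.sin (s / 2) ^ 2 := h2 ▸ h1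
  have h3 : 1 - Real.cos t = 2 * Real.sin (s / 2) ^ 2 := by rw [← hcs, hcos2]; ring
  rw [h3, ← hsq]
  calc 2 * s ^ 2 / Real.pi ^ 2 = 2 * (s ^ 2 / Real.pi ^ 2) := by ring
    _ ≤ 2 * Real.sin (s / 2) ^ 2 := by linarith [h1']

lemma quad_sub_eigen (A : M3) (hAs : Aᵀ = A) (w x : V3) (lam : ℝ)
    (hw : w ⬝ᵥ w = 1) (hAw : A *ᵥ w = lam • w) :
    x ⬝ᵥ (A *ᵥ x) - lam * (w ⬝ᵥ x) ^ 2
      = (x - (w ⬝ᵥ x) • w) ⬝ᵥ (A *ᵥ (x - (w ⬝ᵥ x) • w)) := by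
  have hswap : w ⬝ᵥ (A *ᵥ x) = x ⬝ᵥ (A *ᵥ w) := dot_sym_swap A hAs w x
  rw [Matrix.mulVec_sub, Matrix.mulVec_smul, hAw]
  simp only [sub_dotProduct, smul_dotProduct, dotProduct_sub, dotProduct_smul, smul_eq_mul]
  rw [hswap, hAw]
  simp only [dotProduct_smul, smul_eq_mul, hw, dotProduct_comm x w]
  ring

set_option maxHeartbeats 2000000 in
theorem flow_set_critical_point_is_identity
    (A : M3) (hA : A.PosDef) (u : V3) (hu : u ⬝ᵥ u = 1)
    (Θ : Finset ℝ) (hΘne : Θ.Nonempty) (hΘ : ∀ θ' ∈ Θ, 0 < |θ'| ∧ |θ'| ≤ Real.pi)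
    (θm : ℝ) (hθm : θm = Θ.inf' hΘne (fun θ' => |θ'|))
    (Δstar : ℝ) (hΔpos : 0 < Δstar)
    (hΔ : ∀ v : V3, IsUnitEigen A v → Δstar ≤ Delta A v u)
    (γ δ : ℝ) (hγ : 0 < γ) (hγ' : γ < 4 * Δstar / Real.pi ^ 2)
    (hδ : 0 < δ) (hδ' : δ < (4 * Δstar / Real.pi ^ 2 - γ) * θm ^ 2 / 2)
    (R : M3) (hR : R ∈ SO3) (θ : ℝ)
    (hcrit1 : psi (A * Tmap u R θ) = 0)
    (hcrit2 : γ * θ + 2 * (u ⬝ᵥ psi (A * Tmap u R θ)) = 0)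
    (hflow : Ufun A u γ R θ - Θ.inf' hΘne (fun θ' => Ufun A u γ R θ') ≤ δ) :
    R = 1 ∧ θ = 0 := by
  obtain ⟨hRo, hRdet⟩ := hR
  have hπ := Real.pi_pos
  -- step 1 : θ = 0
  have hψu : u ⬝ᵥ psi (A * Tmap u R θ) = 0 := by
    rw [hcrit1]; simp [dotProduct]
  have hθ0 : θ = 0 := by
    rw [hψu] at hcrit2
    have hγθ : γ * θ = 0 := by linarith
    rcases mul_eq_zero.mp hγθ with h | h
    · exact absurd h (ne_of_gt hγ)
    · exact h
  subst hθ0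
  refine ⟨?_, rfl⟩
  have hRa0 : Ra 0 u = 1 := by simp [Ra]
  have hT0 : Tmap u R 0 = R := by rw [Tmap, hRa0, mul_one]
  rw [hT0] at hcrit1
  have hAsym : Aᵀ = A := by
    have h := hA.1
    rw [Matrix.IsHermitian] at h
    rwa [Matrix.conjTranspose_eq_transpose_of_trivial] at h
  -- step 2 : A * R symmetric
  have hSsym : (A * R)ᵀ = A * R := by
    have e0 := congrFun hcrit1 0
    have e1 := congrFun hcrit1 1
    have e2 := congrFun hcrit1 2
    simp [psi] at e0 e1 e2
    ext i j
    fin_cases i <;> fin_cases j <;> simp [Matrix.transpose_apply] <;> linarith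
  have hRRT : R * Rᵀ = 1 := mul_eq_one_comm.mp hRo
  by_contra hRne
  -- step 3 : a unit fixed vector w of R
  have hdet1 : (R - 1).det = 0 := by
    have h1 : (R - 1)ᵀ = Rᵀ * (1 - R) := by
      rw [Matrix.mul_sub, Matrix.mul_one, hRo, Matrix.transpose_sub, Matrix.transpose_one]
    have h2 := Matrix.det_transpose (R - 1)
    rw [h1, Matrix.det_mul, Matrix.det_transpose, hRdet, one_mul] at h2
    have h3 : (1 - R : M3) = -(R - 1) := by abel
    rw [h3, Matrix.det_neg] at h2
    simp [Fintype.card_fin] at h2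
    linarith
  obtain ⟨v, hvne, hv⟩ := (Matrix.exists_mulVec_eq_zero_iff).mpr hdet1
  have hRv : R *ᵥ v = v := by
    rw [Matrix.sub_mulVec, Matrix.one_mulVec, sub_eq_zero] at hv
    exact hv
  have hv2 : 0 < v ⬝ᵥ v := dot_self_pos v hvne
  obtain ⟨w, hw, hRw⟩ : ∃ w : V3, w ⬝ᵥ w = 1 ∧ R *ᵥ w = w := by
    have hnvpos : 0 < Real.sqrt (v ⬝ᵥ v) := Real.sqrt_pos.mpr hv2
    have hss : Real.sqrt (v ⬝ᵥ v) * Real.sqrt (v ⬝ᵥ v) = v ⬝ᵥ v := Real.mul_self_sqrt hv2.le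
    refine ⟨(Real.sqrt (v ⬝ᵥ v))⁻¹ • v, ?_, ?_⟩
    · rw [smul_dotProduct, dotProduct_smul, smul_eq_mul, smul_eq_mul, ← mul_assoc,
        ← mul_inv, hss]
      exact inv_mul_cancel₀ hv2.ne'
    · rw [Matrix.mulVec_smul, hRv]
  have hwne : w ≠ 0 := by
    intro h
    rw [h] at hw
    simp [dotProduct] at hw
  -- step 4 : R commutes with skew w
  have hKid := skew_conj_pure R w
  rw [hRw, hRdet, one_smul] at hKid
  have hcomm : R * skew w = skew w * R := by
    have h3 : R * (Rᵀ * skew w * R) = R * skew w := by rw [hKid]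
    rw [← Matrix.mul_assoc, ← Matrix.mul_assoc, hRRT, Matrix.one_mul] at h3
    exact h3.symm
  -- step 5 : A *ᵥ w is also fixed by R
  have hRA : Rᵀ * A = A * R := by
    calc Rᵀ * A = Rᵀ * Aᵀ := by rw [hAsym]
    _ = (A * R)ᵀ := (Matrix.transpose_mul A R).symm
    _ = A * R := hSsym
  have hRTy : Rᵀ *ᵥ (A *ᵥ w) = A *ᵥ w := by
    have h : (Rᵀ * A) *ᵥ w = (A * R) *ᵥ w := by rw [hRA]
    rw [← Matrix.mulVec_mulVec, ← Matrix.mulVec_mulVec, hRw] at h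
    exact h
  have hRy : R *ᵥ (A *ᵥ w) = A *ᵥ w := by
    conv_lhs => rw [← hRTy]
    rw [Matrix.mulVec_mulVec, hRRT, Matrix.one_mulVec]
  have hRz : R *ᵥ (skew w *ᵥ (A *ᵥ w)) = skew w *ᵥ (A *ᵥ w) := by
    rw [Matrix.mulVec_mulVec, hcomm, ← Matrix.mulVec_mulVec, hRy]
  -- step 6 : w × (A *ᵥ w) must vanish, else R = 1
  have hzz : skew w *ᵥ (A *ᵥ w) = 0 := by
    by_contra hzz
    apply hRne
    set z : V3 := skew w *ᵥ (A *ᵥ w) with hz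
    set B : M3 := Matrix.of (fun i j => ![w, A *ᵥ w, z] j i) with hB
    have hdetB : B.det = z ⬝ᵥ z := col_det w (A *ᵥ w)
    have hRB : R * B = B := by
      ext i j
      fin_cases j
      · simpa [hB, Matrix.mul_apply, Matrix.mulVec, dotProduct, Fin.sum_univ_three]
          using congrFun hRw i
      · simpa [hB, Matrix.mul_apply, Matrix.mulVec, dotProduct, Fin.sum_univ_three]
          using congrFun hRy i
      · simpa [hB, Matrix.mul_apply, Matrix.mulVec, dotProduct, Fin.sum_univ_three]
          using congrFun hRz i
    have hBunit : IsUnit B.det := by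
      rw [hdetB]
      exact (dot_self_pos z hzz).ne'.isUnit
    calc R = R * (B * B⁻¹) := by rw [Matrix.mul_nonsing_inv B hBunit, mul_one]
    _ = (R * B) * B⁻¹ := by rw [Matrix.mul_assoc]
    _ = B * B⁻¹ := by rw [hRB]
    _ = 1 := Matrix.mul_nonsing_inv B hBunit
  -- step 7 : w is a unit eigenvector of A
  have hyw := cross_zero_unit w (A *ᵥ w) hw hzz
  obtain ⟨lam, hlam⟩ : ∃ lam : ℝ, lam = w ⬝ᵥ (A *ᵥ w) := ⟨_, rfl⟩
  have hAw : A *ᵥ w = lam • w := by rw [hlam]; exact hyw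
  have hlampos : 0 < lam := by
    have h := hA.dotProduct_mulVec_pos hwne
    rw [hlam]
    simpa using h
  have hRTw : Rᵀ *ᵥ w = w := by
    have h := hRTy
    rw [hAw, Matrix.mulVec_smul] at h
    exact smul_right_injective V3 (ne_of_gt hlampos) h
  -- step 8 : setup for plane decomposition
  obtain ⟨K, hK⟩ : ∃ K : M3, K = skew w := ⟨_, rfl⟩
  obtain ⟨Wm, hWm⟩ : ∃ Wm : M3, Wm = vecMulVec w w := ⟨_, rfl⟩
  have hcommK : R * K = K * R := by rw [hK]; exact hcomm
  have hKw : K *ᵥ w = 0 := by rw [hK]; exact skew_mulVec_self w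
  have hWmw : Wm *ᵥ w = w := by rw [hWm, _root_.vecMulVec_mulVec, hw, one_smul]
  have hWmT : Wmᵀ = Wm := by rw [hWm, vecMulVec_transpose]
  have hWmK : Wm * K = 0 := by
    rw [hWm, hK, _root_.vecMulVec_mul, skew_transpose, Matrix.neg_mulVec, skew_mulVec_self,
      neg_zero, vecMulVec_zero_right]
  have hKWm : K * Wm = 0 := by
    rw [hK, hWm, _root_.mul_vecMulVec, skew_mulVec_self, zero_vecMulVec]
  obtain ⟨Bm, hBm⟩ : ∃ Bm : M3, Bm = A - lam • Wm := ⟨_, rfl⟩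
  have hBmsym : Bmᵀ = Bm := by
    rw [hBm, Matrix.transpose_sub, hAsym, Matrix.transpose_smul, hWmT]
  have hBmw : Bm *ᵥ w = 0 := by
    rw [hBm, Matrix.sub_mulVec, hAw, Matrix.smul_mulVec, hWmw, sub_self]
  have htrBm : Bm.trace = A.trace - lam := by
    rw [hBm, Matrix.trace_sub, Matrix.trace_smul, hWm, _root_.trace_vecMulVec, hw, smul_eq_mul, mul_one]
  -- Bm is positive semidefinite
  have hBmPSD : ∀ x : V3, 0 ≤ x ⬝ᵥ (Bm *ᵥ x) := by
    intro x
    have hq := hA.posSemidef.dotProduct_mulVec_nonneg (x - (w ⬝ᵥ x) • w)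
    have hq' : (0:ℝ) ≤ (x - (w ⬝ᵥ x) • w) ⬝ᵥ (A *ᵥ (x - (w ⬝ᵥ x) • w)) := by simpa using hq
    have e2 : x ⬝ᵥ (Bm *ᵥ x) = x ⬝ᵥ (A *ᵥ x) - lam * (w ⬝ᵥ x) ^ 2 := by
      rw [hBm, Matrix.sub_mulVec, Matrix.smul_mulVec, hWm, _root_.vecMulVec_mulVec,
        dotProduct_sub, dotProduct_smul, dotProduct_smul, smul_eq_mul, smul_eq_mul,
        dotProduct_comm x w]
      ring
    rw [e2, quad_sub_eigen A hAsym w x lam hw hAw]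
    exact hq'
  -- step 9 : trace of R * K vanishes
  have htrARK : ((A * R) * K).trace = 0 := by
    rw [hK]; exact trace_sym_mul_skew (A * R) w hSsym
  have htrRKWm : ((R * K) * Wm).trace = 0 := by
    rw [hWm, _root_.mul_vecMulVec, ← Matrix.mulVec_mulVec, hKw, Matrix.mulVec_zero, zero_vecMulVec,
      Matrix.trace_zero]
  have htrWmRK : (Wm * (R * K)).trace = 0 := by rw [Matrix.trace_mul_comm]; exact htrRKWm
  have hAdecomp : A = lam • Wm + Bm := by rw [hBm]; abel
  have htrBmRK : (Bm * (R * K)).trace = 0 := by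
    have e1 : ((A * R) * K).trace = lam * (Wm * (R * K)).trace + (Bm * (R * K)).trace := by
      calc ((A * R) * K).trace = (A * (R * K)).trace := by rw [Matrix.mul_assoc]
      _ = ((lam • Wm + Bm) * (R * K)).trace := by rw [← hAdecomp]
      _ = lam * (Wm * (R * K)).trace + (Bm * (R * K)).trace := by
          rw [Matrix.add_mul, Matrix.trace_add, smul_mul_assoc, Matrix.trace_smul, smul_eq_mul]
    rw [htrARK, htrWmRK] at e1
    linarith
  have hBK : Bm * K + K * Bm = Bm.trace • K := by
    have h := sym_skew_pure Bm w
    rw [hBmsym, hBmw, sub_zero, skew_smul_vec, ← hK] at h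
    exact h
  have h2tr : (Bm * (R * K)).trace + (Bm * (R * K)).trace = Bm.trace * (R * K).trace := by
    have c1 : (Bm * (R * K)).trace = ((K * Bm) * R).trace := by
      calc (Bm * (R * K)).trace = ((Bm * R) * K).trace := by rw [Matrix.mul_assoc]
      _ = (K * (Bm * R)).trace := by rw [Matrix.trace_mul_comm]
      _ = ((K * Bm) * R).trace := by rw [Matrix.mul_assoc]
    have c2 : K * Bm = Bm.trace • K - Bm * K := eq_sub_of_add_eq' hBK
    have c3 : ((K * Bm) * R).trace = Bm.trace * (R * K).trace - (Bm * (R * K)).trace := by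
      rw [c2, Matrix.sub_mul, Matrix.trace_sub, smul_mul_assoc, Matrix.trace_smul, smul_eq_mul,
        Matrix.trace_mul_comm K R, Matrix.mul_assoc, ← hcommK, ← Matrix.mul_assoc,
        Matrix.mul_assoc]
    linarith [c1, c3]
  have hd0 : (0:ℝ) ≤ Bm 0 0 := by
    simpa [dotProduct, Matrix.mulVec, Fin.sum_univ_three] using hBmPSD ![1,0,0]
  have hd1 : (0:ℝ) ≤ Bm 1 1 := by
    simpa [dotProduct, Matrix.mulVec, Fin.sum_univ_three] using hBmPSD ![0,1,0]
  have hd2 : (0:ℝ) ≤ Bm 2 2 := by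
    simpa [dotProduct, Matrix.mulVec, Fin.sum_univ_three] using hBmPSD ![0,0,1]
  have htrBmpos : 0 < Bm.trace := by
    rcases lt_or_ge 0 Bm.trace with h | hle
    · exact h
    exfalso
    have htr3 : Bm 0 0 + Bm 1 1 + Bm 2 2 ≤ 0 := by
      simpa [Matrix.trace, Fin.sum_univ_three, Matrix.diag] using hle
    have h00 : Bm 0 0 = 0 := by linarith
    have h11 : Bm 1 1 = 0 := by linarith
    have h22 : Bm 2 2 = 0 := by linarith
    have hs01 := hBmPSD ![1,1,0]
    have hs01' := hBmPSD ![1,-1,0]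
    have hs02 := hBmPSD ![1,0,1]
    have hs02' := hBmPSD ![1,0,-1]
    have hs12 := hBmPSD ![0,1,1]
    have hs12' := hBmPSD ![0,1,-1]
    simp [dotProduct, Matrix.mulVec, Fin.sum_univ_three] at hs01 hs01' hs02 hs02' hs12 hs12'
    have e01 := congrFun (congrFun hBmsym 0) 1
    have e02 := congrFun (congrFun hBmsym 0) 2
    have e12 := congrFun (congrFun hBmsym 1) 2
    simp [Matrix.transpose_apply] at e01 e02 e12
    have hBm0 : Bm = 0 := by
      ext i j
      fin_cases i <;> fin_cases j <;> simp [Matrix.zero_apply] <;> linarith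
    rw [hBm] at hBm0
    have hAeq : A = lam • Wm := sub_eq_zero.mp hBm0
    have hdetA : A.det = 0 := by
      rw [hAeq, Matrix.det_smul, hWm, det_vecMulVec, mul_zero]
    have hpos := hA.det_pos
    rw [hdetA] at hpos
    exact lt_irrefl 0 hpos
  have htrRK : (R * K).trace = 0 := by
    have hmul : Bm.trace * (R * K).trace = 0 := by linarith [h2tr, htrBmRK]
    rcases mul_eq_zero.mp hmul with h | h
    · exact absurd h (ne_of_gt htrBmpos)
    · exact h
  -- step 10 : R = 2 w wᵀ - 1
  obtain ⟨c, hc⟩ : ∃ c : ℝ, c = (R.trace - 1) / 2 := ⟨_, rfl⟩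
  obtain ⟨H, hH⟩ : ∃ H : M3, H = R - Wm - c • (1 - Wm) := ⟨_, rfl⟩
  have hHK : H * K = K * H := by
    rw [hH]
    simp only [Matrix.sub_mul, Matrix.mul_sub, smul_mul_assoc, mul_smul_comm, hWmK, hKWm,
      Matrix.one_mul, Matrix.mul_one, hcommK, sub_zero]
  have hHw : H *ᵥ w = 0 := by
    rw [hH, Matrix.sub_mulVec, Matrix.sub_mulVec, hRw, Matrix.smul_mulVec,
      Matrix.sub_mulVec, Matrix.one_mulVec, hWmw]
    simp
  have hHT : Hᵀ = Rᵀ - Wm - c • (1 - Wm) := by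
    rw [hH]
    simp [Matrix.transpose_sub, Matrix.transpose_smul, Matrix.transpose_one, hWmT]
  have hHTw : Hᵀ *ᵥ w = 0 := by
    rw [hHT, Matrix.sub_mulVec, Matrix.sub_mulVec, hRTw, Matrix.smul_mulVec,
      Matrix.sub_mulVec, Matrix.one_mulVec, hWmw]
    simp
  have htrWm : Wm.trace = 1 := by rw [hWm, _root_.trace_vecMulVec, hw]
  have htrH : H.trace = 0 := by
    rw [hH, Matrix.trace_sub, Matrix.trace_sub, Matrix.trace_smul, Matrix.trace_sub,
      Matrix.trace_one, htrWm, hc]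
    simp [Fintype.card_fin]
    ring
  have htrHK : (H * K).trace = 0 := by
    rw [hH, Matrix.sub_mul, Matrix.sub_mul, smul_mul_assoc, Matrix.sub_mul, Matrix.one_mul,
      hWmK, Matrix.trace_sub, Matrix.trace_sub, Matrix.trace_smul, Matrix.trace_sub, htrRK,
      Matrix.trace_zero, hK, trace_skew]
    simp
  obtain ⟨Ha, hHa⟩ : ∃ Ha : M3, Ha = H - Hᵀ := ⟨_, rfl⟩
  obtain ⟨yv, hyv⟩ : ∃ yv : V3, yv = ![Ha 2 1, Ha 0 2, Ha 1 0] := ⟨_, rfl⟩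
  have hHaskew : Ha = skew yv := by
    ext i j
    rw [hyv]
    fin_cases i <;> fin_cases j <;>
      (simp [hHa, skew, Matrix.sub_apply, Matrix.transpose_apply]; try ring)
  have hHaw : Ha *ᵥ w = 0 := by rw [hHa, Matrix.sub_mulVec, hHw, hHTw, sub_self]
  have hyv_cross : skew w *ᵥ yv = 0 := by
    have h := hHaw
    rw [hHaskew, skew_mulVec_anticomm] at h
    simpa using h
  have hwyv0 : w ⬝ᵥ yv = 0 := by
    have h1 : (Hᵀ * K).trace = - (H * K).trace := by
      calc (Hᵀ * K).trace = ((Hᵀ * K)ᵀ).trace := (Matrix.trace_transpose _).symm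
      _ = (Kᵀ * H).trace := by rw [Matrix.transpose_mul, Matrix.transpose_transpose]
      _ = - (H * K).trace := by
          rw [hK, skew_transpose, Matrix.neg_mul, Matrix.trace_neg, Matrix.trace_mul_comm]
    have htrHaK : (Ha * K).trace = 0 := by
      rw [hHa, Matrix.sub_mul, Matrix.trace_sub, htrHK, h1, htrHK]
      simp
    rw [hHaskew, hK, skew_mul_skew, Matrix.trace_sub, _root_.trace_vecMulVec, Matrix.trace_smul,
      Matrix.trace_one, dotProduct_comm yv w] at htrHaK
    simp [smul_eq_mul, Fintype.card_fin] at htrHaK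
    have hexpand : w ⬝ᵥ yv = w 0 * yv 0 + w 1 * yv 1 + w 2 * yv 2 := by
      simp [dotProduct, Fin.sum_univ_three]
    rw [hexpand]
    linarith [htrHaK]
  have hHsym : Hᵀ = H := by
    have hyv0 : yv = 0 := by
      have h := cross_zero_unit w yv hw hyv_cross
      rw [hwyv0, zero_smul] at h
      exact h
    have h0 : Ha = 0 := by rw [hHaskew, hyv0, skew_zero]
    rw [hHa] at h0
    exact (sub_eq_zero.mp h0).symm
  have hHK0 : H * K = 0 := by
    have h := sym_skew_pure H w
    rw [hHsym, hHw, htrH, zero_smul, sub_zero, skew_zero, ← hK, hHK] at h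
    have h2 : (2:ℝ) • (K * H) = 0 := by rw [two_smul]; exact h
    have h3 : K * H = 0 := by
      rcases smul_eq_zero.mp h2 with h' | h'
      · norm_num at h'
      · exact h'
    rw [hHK, h3]
  have hH0 : H = 0 := by
    have h2 : H * (K * K) = 0 := by rw [← Matrix.mul_assoc, hHK0, Matrix.zero_mul]
    rw [hK, skew_mul_skew, hw, one_smul, ← hWm, Matrix.mul_sub, Matrix.mul_one,
      sub_eq_zero] at h2
    have h3 : H * Wm = 0 := by rw [hWm, _root_.mul_vecMulVec, hHw, zero_vecMulVec]
    rw [h3] at h2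
    exact h2.symm
  have hRform : R = Wm + c • (1 - Wm) := by
    rw [hH, sub_sub, sub_eq_zero] at hH0
    exact hH0
  have hWm2 : Wm * Wm = Wm := by
    have h := _root_.mul_vecMulVec Wm w w
    rw [hWmw, ← hWm] at h
    exact h
  have hRsymm : Rᵀ = R := by
    rw [hRform]
    rw [Matrix.transpose_add, Matrix.transpose_smul, Matrix.transpose_sub, Matrix.transpose_one,
      hWmT]
  have hRR1 : R * R = 1 := by
    rw [← hRo, hRsymm]
  have hexp : R * R = Wm + (c * c) • (1 - Wm) := by
    have h1 : Wm * ((1:M3) - Wm) = 0 := by rw [Matrix.mul_sub, Matrix.mul_one, hWm2, sub_self]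
    have h2 : ((1:M3) - Wm) * Wm = 0 := by rw [Matrix.sub_mul, Matrix.one_mul, hWm2, sub_self]
    have h3 : ((1:M3) - Wm) * ((1:M3) - Wm) = (1:M3) - Wm := by
      rw [Matrix.sub_mul, Matrix.one_mul, Matrix.mul_sub, Matrix.mul_one, hWm2]
      abel
    rw [hRform, Matrix.add_mul, Matrix.mul_add, Matrix.mul_add, hWm2, mul_smul_comm, h1,
      smul_zero, add_zero, smul_mul_assoc, h2, smul_zero, zero_add, smul_mul_assoc,
      mul_smul_comm, h3, smul_smul]
  have hc2 : c * c = 1 := by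
    rw [hRR1] at hexp
    have htr := congrArg Matrix.trace hexp
    simp [Matrix.trace_add, Matrix.trace_smul, Matrix.trace_sub, Matrix.trace_one, htrWm,
      Fintype.card_fin, smul_eq_mul] at htr
    linarith
  have hcm1 : c = -1 := by
    have hfac : (c - 1) * (c + 1) = 0 := by nlinarith [hc2]
    rcases mul_eq_zero.mp hfac with h | h
    · exfalso
      apply hRne
      have hc1 : c = 1 := by linarith
      rw [hRform, hc1, one_smul]
      abel
    · linarith
  have hRfinal : R = Wm + Wm - 1 := by
    rw [hRform, hcm1, neg_smul, one_smul]
    abel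
  have hAWm : A * Wm = lam • Wm := by
    rw [hWm, _root_.mul_vecMulVec, hAw, smul_vecMulVec, ← hWm]
  have hSval : A * R = lam • Wm + lam • Wm - A := by
    rw [hRfinal, Matrix.mul_sub, Matrix.mul_add, Matrix.mul_one, hAWm]
  -- step 11 : contradiction with the flow condition
  obtain ⟨θ0, hθ0mem, hinfU⟩ := Finset.exists_mem_eq_inf' hΘne (fun θ' => Ufun A u γ R θ')
  rw [hinfU] at hflow
  obtain ⟨hθ0pos, hθ0le⟩ := hΘ θ0 hθ0mem
  obtain ⟨Ku, hKu⟩ : ∃ Ku : M3, Ku = skew u := ⟨_, rfl⟩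
  have hKu2 : Ku * Ku = vecMulVec u u - 1 := by rw [hKu, skew_mul_skew, hu, one_smul]
  have htrSKu : ((A * R) * Ku).trace = 0 := by
    rw [hKu]; exact trace_sym_mul_skew (A * R) u hSsym
  have htrSKu2 : ((A * R) * (Ku * Ku)).trace = ((A * R) *ᵥ u) ⬝ᵥ u - (A * R).trace := by
    rw [hKu2, Matrix.mul_sub, Matrix.mul_one, Matrix.trace_sub, _root_.mul_vecMulVec, _root_.trace_vecMulVec]
  have hU0 : Ufun A u γ R 0 = A.trace - (A * R).trace := by
    rw [Ufun, hT0, Matrix.mul_sub, Matrix.mul_one, Matrix.trace_sub]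
    ring
  have hUθ : Ufun A u γ R θ0 = A.trace - (A * R).trace
      - Real.sin θ0 * ((A * R) * Ku).trace
      - (1 - Real.cos θ0) * ((A * R) * (Ku * Ku)).trace + γ / 2 * θ0 ^ 2 := by
    rw [Ufun, Tmap, Ra, ← hKu]
    simp only [Matrix.mul_add, Matrix.mul_one, Matrix.mul_sub, mul_smul_comm,
      Matrix.trace_sub, Matrix.trace_add, Matrix.trace_smul, smul_eq_mul, ← Matrix.mul_assoc]
    ring
  have hDelta : ((A * R) *ᵥ u) ⬝ᵥ u - (A * R).trace = Delta A w u := by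
    rw [hSval, Delta, hAw, hWm]
    simp only [Matrix.sub_mulVec, Matrix.add_mulVec, Matrix.smul_mulVec, Matrix.one_mulVec,
      _root_.vecMulVec_mulVec, Matrix.trace_sub, Matrix.trace_add, Matrix.trace_smul, _root_.trace_vecMulVec,
      hw, sub_dotProduct, add_dotProduct, smul_dotProduct, dotProduct_sub, dotProduct_add,
      dotProduct_smul, smul_eq_mul, hu]
    rw [dotProduct_comm u w, dotProduct_comm (A *ᵥ u) u]
    ring
  have hUdiff : Ufun A u γ R 0 - Ufun A u γ R θ0
      = (1 - Real.cos θ0) * Delta A w u - γ / 2 * θ0 ^ 2 := by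
    rw [hU0, hUθ, htrSKu, htrSKu2, hDelta]
    ring
  have hDge : Δstar ≤ Delta A w u := hΔ w ⟨hw, lam, hAw⟩
  have hθm_le : θm ≤ |θ0| := by rw [hθm]; exact Finset.inf'_le _ hθ0mem
  have hθmpos : 0 < θm := by
    rw [hθm]
    exact (Finset.lt_inf'_iff hΘne).mpr (fun b hb => (hΘ b hb).1)
  have hθ02 : θm ^ 2 ≤ θ0 ^ 2 := by
    have h := pow_le_pow_left₀ hθmpos.le hθm_le 2
    rwa [sq_abs] at h
  have hcosb := jordan_one_sub_cos θ0 hθ0le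
  have hπ2 : (0:ℝ) < Real.pi ^ 2 := by positivity
  have hγπ : γ * Real.pi ^ 2 < 4 * Δstar := by
    have h := (lt_div_iff₀ hπ2).mp hγ'
    linarith only [h]
  have hcoef : 0 < 4 * Δstar - γ * Real.pi ^ 2 := by linarith only [hγπ]
  have hδπ : δ * Real.pi ^ 2 < (4 * Δstar - γ * Real.pi ^ 2) * θm ^ 2 / 2 := by
    have heq : ((4 * Δstar / Real.pi ^ 2 - γ) * θm ^ 2 / 2) * Real.pi ^ 2
        = (4 * Δstar - γ * Real.pi ^ 2) * θm ^ 2 / 2 := by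
      field_simp
    have h := mul_lt_mul_of_pos_right hδ' hπ2
    rw [heq] at h
    exact h
  have hb2 : 2 * θ0 ^ 2 ≤ (1 - Real.cos θ0) * Real.pi ^ 2 := by
    rw [div_le_iff₀ hπ2] at hcosb
    linarith only [hcosb]
  have h1cos : 0 ≤ (1 - Real.cos θ0) * Real.pi ^ 2 := le_trans (by positivity) hb2
  have hprod : 2 * θ0 ^ 2 * Δstar ≤ (1 - Real.cos θ0) * Real.pi ^ 2 * Delta A w u :=
    mul_le_mul hb2 hDge hΔpos.le h1cos
  have hθm2 : (4 * Δstar - γ * Real.pi ^ 2) * θm ^ 2 ≤ (4 * Δstar - γ * Real.pi ^ 2) * θ0 ^ 2 :=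
    mul_le_mul_of_nonneg_left hθ02 hcoef.le
  have hgt : δ < Ufun A u γ R 0 - Ufun A u γ R θ0 := by
    rw [hUdiff]
    have hX : δ * Real.pi ^ 2
        < ((1 - Real.cos θ0) * Delta A w u - γ / 2 * θ0 ^ 2) * Real.pi ^ 2 := by
      linarith only [hprod, hθm2, hδπ]
    exact lt_of_mul_lt_mul_right hX hπ2.le
  linarith only [hflow, hgt]
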